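/- arXiv:1010.5382 — 3 statements merged into one kernel-verified Lean document; each statement's English description precedes it below -/
import Mathlib

section
/- Converse for a single bit over the noiseless-feedback Poisson channel with zero dark current, reduced form: let x : [0,∞) → [0,∞) be measurable and locally integrable, let T₁ be a nonnegative random variable with P(T₁ > t) = exp(−∫₀ᵗ x(s) ds) for all t ≥ 0, and let T ≥ 0. Suppose the conditional probability of error given D = 1, namely P(T₁ > T) = exp(−∫₀^T x(s) ds), is at most ε for some ε ∈ [0,1]. Then the energy used to convey D = 1 satisfies ℰ₁ := E[∫₀^{min(T₁,T)} x(s) ds] ≥ 1 − ε, and hence the average energy over the two equiprobable messages (with the zero message sent with the all-zero input, so ℰ₀ = 0) satisfies (ℰ₀ + ℰ₁)/2 ≥ (1 − ε)/2. -/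
open MeasureTheory Real
open intervalIntegral in

/-- Converse for one bit over the noiseless-feedback Poisson channel with zero dark
current (reduced form): if the error probability given `D = 1`, namely
`P(T₁ > T) = exp (-∫₀ᵀ x)`, is at most `ε`, then the energy used to convey `D = 1`,
`ℰ₁ = E[∫₀^{min(T₁,T)} x]`, is at least `1 - ε`, and the average energy over the two
equiprobable messages (with `ℰ₀ = 0`) is at least `(1 - ε)/2`. -/
theorem converse_one_bit
    {Ω : Type*} [MeasurableSpace Ω] (μ : Measure Ω) [IsProbabilityMeasure μ]
    (x : ℝ → ℝ) (hx_meas : Measurable x)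
    (hx_nonneg : ∀ t : ℝ, 0 ≤ t → 0 ≤ x t)
    (hx_loc : ∀ T : ℝ, 0 ≤ T → IntegrableOn x (Set.Icc 0 T))
    (T₁ : Ω → ℝ) (hT₁_meas : Measurable T₁)
    (hT₁_nonneg : ∀ ω, 0 ≤ T₁ ω)
    (hsurv : ∀ t : ℝ, 0 ≤ t →
      μ {ω | t < T₁ ω} = ENNReal.ofReal (Real.exp (-(∫ s in (0:ℝ)..t, x s))))
    (T : ℝ) (hT : 0 ≤ T)
    (ε : ℝ) (hε : ε ∈ Set.Icc (0:ℝ) 1)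
    (herr : Real.exp (-(∫ s in (0:ℝ)..T, x s)) ≤ ε) :
    1 - ε ≤ (∫ ω, (∫ s in (0:ℝ)..(min (T₁ ω) T), x s) ∂μ)
      ∧ (1 - ε) / 2 ≤ (0 + ∫ ω, (∫ s in (0:ℝ)..(min (T₁ ω) T), x s) ∂μ) / 2 := by
  classical
  -- interval integrability on nonnegative intervals
  have hII : ∀ a b : ℝ, 0 ≤ a → a ≤ b → IntervalIntegrable x volume a b := by
    intro a b ha hab
    refine IntegrableOn.intervalIntegrable ?_
    rw [Set.uIcc_of_le hab]
    exact (hx_loc b (ha.trans hab)).mono_set (Set.Icc_subset_Icc_left ha)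
  -- the (extended) cumulative intensity
  set Λ : ℝ → ℝ := fun t => ∫ s in (0:ℝ)..(max t 0), x s with hΛdef
  have hΛeq : ∀ t : ℝ, 0 ≤ t → Λ t = ∫ s in (0:ℝ)..t, x s := by
    intro t ht
    simp [hΛdef, max_eq_left ht]
  have hΛ0 : Λ 0 = 0 := by simp [hΛdef]
  have hΛmono : Monotone Λ := by
    intro a b hab
    have h0a : (0:ℝ) ≤ max a 0 := le_max_right _ _
    have hab' : max a 0 ≤ max b 0 := max_le_max hab le_rfl
    have key := intervalIntegral.integral_add_adjacent_intervals
      (hII 0 (max a 0) le_rfl h0a) (hII (max a 0) (max b 0) h0a hab')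
    have hnn : 0 ≤ ∫ s in (max a 0)..(max b 0), x s :=
      intervalIntegral.integral_nonneg hab' (fun u hu => hx_nonneg u (h0a.trans hu.1))
    show (∫ s in (0:ℝ)..(max a 0), x s) ≤ ∫ s in (0:ℝ)..(max b 0), x s
    linarith
  have hΛcont : Continuous Λ := by
    rw [continuous_iff_continuousAt]
    intro z
    have hR1 : (0:ℝ) ≤ |z| + 1 := by positivity
    have hP : ContinuousOn (fun u => ∫ s in (0:ℝ)..u, x s) (Set.Icc 0 (|z| + 1)) := by
      have h := intervalIntegral.continuousOn_primitive_interval (a := (0:ℝ)) (b := |z| + 1)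
        (μ := volume) (f := x) (by rw [Set.uIcc_of_le hR1]; exact hx_loc _ hR1)
      rwa [Set.uIcc_of_le hR1] at h
    have hmap : Set.MapsTo (fun t : ℝ => max t 0) (Set.Iio (|z| + 1)) (Set.Icc 0 (|z| + 1)) := by
      intro t ht
      exact ⟨le_max_right _ _, max_le ht.le hR1⟩
    have hcm : ContinuousOn Λ (Set.Iio (|z| + 1)) :=
      hP.comp (continuous_id.max continuous_const).continuousOn hmap
    exact hcm.continuousAt (Iio_mem_nhds (by nlinarith [abs_nonneg z, le_abs_self z]))
  -- the random accumulated energy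
  set Y : Ω → ℝ := fun ω => Λ (min (T₁ ω) T) with hYdef
  have hmin0 : ∀ ω, 0 ≤ min (T₁ ω) T := fun ω => le_min (hT₁_nonneg ω) hT
  have hYeq : ∀ ω, Y ω = ∫ s in (0:ℝ)..(min (T₁ ω) T), x s := fun ω => hΛeq _ (hmin0 ω)
  have hYmeas : Measurable Y := hΛcont.measurable.comp (hT₁_meas.min measurable_const)
  set L : ℝ := Λ T with hLdef
  have hL0 : 0 ≤ L := by
    rw [hLdef, hΛeq T hT]
    exact intervalIntegral.integral_nonneg hT (fun u hu => hx_nonneg u hu.1)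
  have hYnn : ∀ ω, 0 ≤ Y ω := by
    intro ω
    have := hΛmono (hmin0 ω)
    rwa [hΛ0] at this
  have hYle : ∀ ω, Y ω ≤ L := fun ω => hΛmono (min_le_right _ _)
  have hYint : Integrable Y μ := by
    refine (integrable_const L).mono' hYmeas.aestronglyMeasurable (ae_of_all _ fun ω => ?_)
    rw [Real.norm_eq_abs, abs_of_nonneg (hYnn ω)]
    exact hYle ω
  -- layer cake
  have hlayer : ∫ ω, Y ω ∂μ = ∫ t in Set.Ioi (0:ℝ), (μ {ω | t < Y ω}).toReal :=
    hYint.integral_eq_integral_meas_lt (ae_of_all _ hYnn)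
  set g : ℝ → ℝ := fun t => (μ {ω | t < Y ω}).toReal with hgdef
  have hganti : Antitone g := fun s t hst =>
    ENNReal.toReal_mono (measure_ne_top μ _)
      (measure_mono fun ω hω => lt_of_le_of_lt hst hω)
  have hgmeas : Measurable g := hganti.measurable
  have hgnn : ∀ t, 0 ≤ g t := fun t => ENNReal.toReal_nonneg
  have hgle1 : ∀ t, g t ≤ 1 := by
    intro t
    have h := ENNReal.toReal_mono (by simp) (prob_le_one (μ := μ) (s := {ω | t < Y ω}))
    simpa using h
  have hg0 : ∀ t, L ≤ t → g t = 0 := by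
    intro t ht
    have : {ω | t < Y ω} = ∅ := by
      ext ω
      simp only [Set.mem_setOf_eq, Set.mem_empty_iff_false, iff_false, not_lt]
      exact (hYle ω).trans ht
    simp [hgdef, this]
  -- integrability of g on (0, ∞)
  have hgint1 : IntegrableOn g (Set.Ioc 0 L) := by
    refine Integrable.mono' (g := fun _ : ℝ => (1:ℝ))
      (integrableOn_const measure_Ioc_lt_top.ne)
      hgmeas.aestronglyMeasurable.restrict (ae_of_all _ fun t => ?_)
    rw [Real.norm_eq_abs, abs_of_nonneg (hgnn t)]
    exact hgle1 t
  have hgint2 : IntegrableOn g (Set.Ioi L) := by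
    refine (integrableOn_congr_fun (fun t ht => hg0 t (le_of_lt ht)) measurableSet_Ioi).mpr ?_
    exact integrableOn_zero
  have hgint : IntegrableOn g (Set.Ioi 0) := by
    rw [← Set.Ioc_union_Ioi_eq_Ioi hL0]
    exact hgint1.union hgint2
  -- pointwise lower bound on (0, L)
  have hcore : ∀ t ∈ Set.Ioo (0:ℝ) L, Real.exp (-t) ≤ g t := by
    intro t ht
    set S : Set ℝ := Set.Icc 0 T ∩ Λ ⁻¹' Set.Iic t with hSdef
    have hSne : S.Nonempty := ⟨0, ⟨le_rfl, hT⟩, by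
      simp only [Set.mem_preimage, Set.mem_Iic, hΛ0]; exact ht.1.le⟩
    have hSbdd : BddAbove S := ⟨T, fun s hs => hs.1.2⟩
    have hSclosed : IsClosed S := isClosed_Icc.inter (isClosed_Iic.preimage hΛcont)
    set c := sSup S with hcdef
    have hcS : c ∈ S := hSclosed.csSup_mem hSne hSbdd
    have hc0 : 0 ≤ c := hcS.1.1
    have hΛc : Λ c ≤ t := hcS.2
    have hcltT : c < T := by
      rcases lt_or_eq_of_le hcS.1.2 with h | h
      · exact h
      · exfalso; rw [h] at hΛc; exact absurd ht.2 (not_lt.mpr hΛc)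
    have hsub : {ω | c < T₁ ω} ⊆ {ω | t < Y ω} := by
      intro ω hω
      have hm : c < min (T₁ ω) T := lt_min hω hcltT
      by_contra hcon
      simp only [Set.mem_setOf_eq, not_lt] at hcon
      have hmem : min (T₁ ω) T ∈ S := ⟨⟨hmin0 ω, min_le_right _ _⟩, hcon⟩
      exact absurd (le_csSup hSbdd hmem) (not_le.mpr hm)
    have hmeasge : ENNReal.ofReal (Real.exp (-t)) ≤ μ {ω | t < Y ω} := by
      calc ENNReal.ofReal (Real.exp (-t))
          ≤ ENNReal.ofReal (Real.exp (-(∫ s in (0:ℝ)..c, x s))) := by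
            apply ENNReal.ofReal_le_ofReal
            apply Real.exp_le_exp.mpr
            rw [← hΛeq c hc0]
            linarith
        _ = μ {ω | c < T₁ ω} := (hsurv c hc0).symm
        _ ≤ μ {ω | t < Y ω} := measure_mono hsub
    have h := ENNReal.toReal_mono (measure_ne_top μ _) hmeasge
    rwa [ENNReal.toReal_ofReal (Real.exp_nonneg _)] at h
  -- assembling the bound
  have h3 : ∫ t in Set.Ioo (0:ℝ) L, Real.exp (-t) = 1 - Real.exp (-L) := by
    rw [← integral_Ioc_eq_integral_Ioo, ← intervalIntegral.integral_of_le hL0]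
    rw [intervalIntegral.integral_comp_neg (fun u => Real.exp u),
      integral_exp]
    simp
  have h1 : ∫ t in Set.Ioo (0:ℝ) L, Real.exp (-t) ≤ ∫ t in Set.Ioo (0:ℝ) L, g t := by
    refine setIntegral_mono_on ?_ (hgint.mono_set Set.Ioo_subset_Ioi_self)
      measurableSet_Ioo hcore
    exact ((Real.continuous_exp.comp continuous_neg).integrableOn_Icc).mono_set
      Set.Ioo_subset_Icc_self
  have h2 : ∫ t in Set.Ioo (0:ℝ) L, g t ≤ ∫ t in Set.Ioi (0:ℝ), g t :=
    setIntegral_mono_set hgint (ae_of_all _ fun t => hgnn t)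
      (HasSubset.Subset.eventuallyLE Set.Ioo_subset_Ioi_self)
  have hmain : 1 - Real.exp (-L) ≤ ∫ ω, Y ω ∂μ := by
    rw [hlayer]
    calc 1 - Real.exp (-L) = ∫ t in Set.Ioo (0:ℝ) L, Real.exp (-t) := h3.symm
      _ ≤ ∫ t in Set.Ioo (0:ℝ) L, g t := h1
      _ ≤ ∫ t in Set.Ioi (0:ℝ), g t := h2
  have hLε : Real.exp (-L) ≤ ε := by
    rw [hLdef, hΛeq T hT]
    exact herr
  have hEq : (∫ ω, (∫ s in (0:ℝ)..(min (T₁ ω) T), x s) ∂μ) = ∫ ω, Y ω ∂μ :=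
    integral_congr_ae (ae_of_all _ fun ω => (hYeq ω).symm)
  constructor
  · rw [hEq]; linarith
  · rw [hEq]; linarith
end

section
/- Converse for sending log₂ M bits over the noiseless-feedback Poisson channel with zero dark current, reduced (genie-aided) form: let M ≥ 2 be an integer, and for each nonzero message m ∈ {1, …, M−1} let x_m : [0,∞) → [0,∞) be measurable and locally integrable and let T₁^{(m)} be a nonnegative random variable with P(T₁^{(m)} > t) = exp(−∫₀ᵗ x_m(s) ds) for all t ≥ 0. Fix T ≥ 0 and ε ∈ [0,1], and suppose that for every m ∈ {1, …, M−1} the conditional probability of error given message m, namely exp(−∫₀^T x_m(s) ds), is at most ε. Then each ℰ_m := E[∫₀^{min(T₁^{(m)},T)} x_m(s) ds] satisfies ℰ_m ≥ 1 − ε, and the average energy over the M equiprobable messages (with ℰ₀ = 0 for the zero message sent with the all-zero input) satisfies (1/M) Σ_{m=0}^{M−1} ℰ_m ≥ (M−1)(1−ε)/M. -/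
open MeasureTheory Real

/-- Key one-message lemma: the expected truncated energy is at least `1 - ε`. -/
lemma key_one_message
    {Ω : Type*} [MeasurableSpace Ω] (μ : Measure Ω) [IsProbabilityMeasure μ]
    (f : ℝ → ℝ) (g : Ω → ℝ)
    (hf_nonneg : ∀ t : ℝ, 0 ≤ t → 0 ≤ f t)
    (T : ℝ) (hT : 0 ≤ T)
    (hf_int : IntegrableOn f (Set.Icc 0 T))
    (hg_meas : Measurable g)
    (hg_nonneg : ∀ ω, 0 ≤ g ω)
    (hsurv : ∀ t : ℝ, 0 ≤ t →
      μ {ω | t < g ω} = ENNReal.ofReal (Real.exp (-(∫ s in (0:ℝ)..t, f s))))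
    (ε : ℝ)
    (herr : Real.exp (-(∫ s in (0:ℝ)..T, f s)) ≤ ε) :
    1 - ε ≤ ∫ ω, (∫ s in (0:ℝ)..(min (g ω) T), f s) ∂μ := by
  set F : ℝ → ℝ := fun t => ∫ s in (0:ℝ)..t, f s with hF
  set a : ℝ := F T with ha
  -- continuity of the primitive on [0,T]
  have hFcont : ContinuousOn F (Set.Icc 0 T) := by
    have h1 : Set.uIcc (0:ℝ) T = Set.Icc 0 T := Set.uIcc_of_le hT
    have := intervalIntegral.continuousOn_primitive_interval
      (a := (0:ℝ)) (b := T) (μ := volume) (f := f) (by rwa [h1])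
    rwa [h1] at this
  -- interval integrability on subintervals of [0,T]
  have hii : ∀ u v : ℝ, 0 ≤ u → u ≤ v → v ≤ T → IntervalIntegrable f volume u v := by
    intro u v hu huv hv
    apply MeasureTheory.IntegrableOn.intervalIntegrable
    apply hf_int.mono_set
    intro s hs
    rw [Set.uIcc_of_le huv] at hs
    exact ⟨le_trans hu hs.1, le_trans hs.2 hv⟩
  -- monotonicity of F on [0,T]
  have hFmono : ∀ u v : ℝ, 0 ≤ u → u ≤ v → v ≤ T → F u ≤ F v := by
    intro u v hu huv hv
    have h1 : IntervalIntegrable f volume 0 u := hii 0 u le_rfl hu (le_trans huv hv)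
    have h2 : IntervalIntegrable f volume u v := hii u v hu huv hv
    have hadd : F u + (∫ s in u..v, f s) = F v :=
      intervalIntegral.integral_add_adjacent_intervals h1 h2
    have hnn : 0 ≤ ∫ s in u..v, f s := by
      apply intervalIntegral.integral_nonneg huv
      intro s hs
      exact hf_nonneg s (le_trans hu hs.1)
    linarith
  have hF0 : F 0 = 0 := intervalIntegral.integral_same
  have hFnn : ∀ t : ℝ, 0 ≤ t → t ≤ T → 0 ≤ F t := by
    intro t ht htT
    have := hFmono 0 t le_rfl ht htT
    linarith
  have ha_nn : 0 ≤ a := hFnn T hT le_rfl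
  set Y : Ω → ℝ := fun ω => F (min (g ω) T) with hY
  have hmem : ∀ ω, min (g ω) T ∈ Set.Icc (0:ℝ) T :=
    fun ω => ⟨le_min (hg_nonneg ω) hT, min_le_right _ _⟩
  -- measurability of Y
  have hH : Continuous (fun t : ℝ => F (max 0 (min t T))) := by
    apply hFcont.comp_continuous (continuous_const.max (continuous_id.min continuous_const))
    intro t
    exact ⟨le_max_left _ _, max_le hT (min_le_right _ _)⟩
  have hYeq : ∀ ω, Y ω = (fun t : ℝ => F (max 0 (min t T))) (g ω) := by
    intro ω
    simp only [hY]
    congr 1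
    rw [max_eq_right (hmem ω).1]
  have hYmeas : Measurable Y := by
    have hcomp : Y = (fun t : ℝ => F (max 0 (min t T))) ∘ g := funext hYeq
    rw [hcomp]
    exact hH.measurable.comp hg_meas
  have hY_nn : ∀ ω, 0 ≤ Y ω := fun ω => hFnn _ (hmem ω).1 (hmem ω).2
  have hY_le : ∀ ω, Y ω ≤ a := fun ω => hFmono _ _ (hmem ω).1 (hmem ω).2 le_rfl
  have hYint : Integrable Y μ := by
    refine Integrable.mono' (integrable_const a) hYmeas.aestronglyMeasurable ?_
    exact Filter.Eventually.of_forall fun ω => by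
      rw [Real.norm_eq_abs, abs_of_nonneg (hY_nn ω)]; exact hY_le ω
  -- layer cake
  have hlc : ∫ ω, Y ω ∂μ
      = ∫ t in Set.Ioc 0 a, ENNReal.toReal (μ {ω | t ≤ Y ω}) :=
    hYint.integral_eq_integral_Ioc_meas_le
      (Filter.Eventually.of_forall hY_nn) (Filter.Eventually.of_forall hY_le)
  -- pointwise lower bound on the tail probabilities
  have hpt : ∀ t ∈ Set.Ioc (0:ℝ) a, Real.exp (-t) ≤ ENNReal.toReal (μ {ω | t ≤ Y ω}) := by
    intro t ht
    obtain ⟨htpos, hta⟩ := ht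
    -- IVT to find u with F u = t
    have hIVT : Set.Icc (F 0) (F T) ⊆ F '' Set.Icc 0 T :=
      intermediate_value_Icc hT hFcont
    obtain ⟨u, hu, hFu⟩ := hIVT ⟨by rw [hF0]; exact htpos.le, hta⟩
    subst hFu
    have hsub : {ω | u < g ω} ⊆ {ω | F u ≤ Y ω} := by
      intro ω hω
      have h1 : u ≤ min (g ω) T := le_min (le_of_lt hω) hu.2
      have := hFmono u (min (g ω) T) hu.1 h1 (min_le_right _ _)
      simpa [hY] using this
    have hmeas_le : ENNReal.ofReal (Real.exp (-(F u))) ≤ μ {ω | F u ≤ Y ω} := by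
      rw [← hsurv u hu.1]
      exact measure_mono hsub
    have hfin : μ {ω | F u ≤ Y ω} ≠ ⊤ := measure_ne_top μ _
    calc Real.exp (-(F u)) = (ENNReal.ofReal (Real.exp (-(F u)))).toReal :=
          (ENNReal.toReal_ofReal (Real.exp_nonneg _)).symm
      _ ≤ (μ {ω | F u ≤ Y ω}).toReal := ENNReal.toReal_mono hfin hmeas_le
  -- integrate the lower bound
  have h_exp_int : IntegrableOn (fun t => Real.exp (-t)) (Set.Ioc 0 a) := by
    apply Continuous.integrableOn_Ioc
    exact Real.continuous_exp.comp continuous_neg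
  have h_tail_meas : Measurable (fun t : ℝ => ENNReal.toReal (μ {ω | t ≤ Y ω})) := by
    apply Measurable.ennreal_toReal
    apply Antitone.measurable
    intro s t hst
    exact measure_mono fun ω hω => le_trans hst hω
  have h_tail_int : IntegrableOn (fun t : ℝ => ENNReal.toReal (μ {ω | t ≤ Y ω}))
      (Set.Ioc 0 a) := by
    refine Integrable.mono' (g := fun _ => (1:ℝ)) ?_ h_tail_meas.aestronglyMeasurable ?_
    · exact (integrableOn_const_iff (by simp)).mpr (Or.inr measure_Ioc_lt_top)
    · refine Filter.Eventually.of_forall fun t => ?_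
      rw [Real.norm_eq_abs, abs_of_nonneg ENNReal.toReal_nonneg]
      have := prob_le_one (μ := μ) (s := {ω | t ≤ Y ω})
      calc (μ {ω | t ≤ Y ω}).toReal ≤ (1 : ENNReal).toReal :=
            ENNReal.toReal_mono (by simp) this
        _ = 1 := by simp
  have hcompare : ∫ t in Set.Ioc 0 a, Real.exp (-t)
      ≤ ∫ t in Set.Ioc 0 a, ENNReal.toReal (μ {ω | t ≤ Y ω}) :=
    setIntegral_mono_on h_exp_int h_tail_int measurableSet_Ioc hpt
  -- compute the exponential integral
  have hval : ∫ t in Set.Ioc 0 a, Real.exp (-t) = 1 - Real.exp (-a) := by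
    rw [← intervalIntegral.integral_of_le ha_nn]
    rw [intervalIntegral.integral_comp_neg (fun t => Real.exp t)]
    rw [integral_exp]
    simp
  have herr' : 1 - ε ≤ 1 - Real.exp (-a) := by
    have : Real.exp (-a) ≤ ε := herr
    linarith
  calc 1 - ε ≤ 1 - Real.exp (-a) := herr'
    _ = ∫ t in Set.Ioc 0 a, Real.exp (-t) := hval.symm
    _ ≤ ∫ t in Set.Ioc 0 a, ENNReal.toReal (μ {ω | t ≤ Y ω}) := hcompare
    _ = ∫ ω, Y ω ∂μ := hlc.symm

/-- Converse for sending `log₂ M` bits over the noiseless-feedback Poisson channel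
with zero dark current (genie-aided, reduced form): if for each nonzero message
`m ∈ {1, …, M-1}` the conditional error probability `exp (-∫₀ᵀ x_m)` is at most
`ε`, then each energy `ℰ_m = E[∫₀^{min(T₁⁽ᵐ⁾,T)} x_m]` is at least `1 - ε`, and
the average energy over the `M` equiprobable messages (with `ℰ₀ = 0` for the zero
message) is at least `(M-1)(1-ε)/M`. -/
theorem converse_M_messages
    (M : ℕ) (hM : 2 ≤ M)
    {Ω : Type*} [MeasurableSpace Ω] (μ : Measure Ω) [IsProbabilityMeasure μ]
    (x : ℕ → ℝ → ℝ) (T₁ : ℕ → Ω → ℝ)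
    (hx_meas : ∀ m, 1 ≤ m → m < M → Measurable (x m))
    (hx_nonneg : ∀ m, 1 ≤ m → m < M → ∀ t : ℝ, 0 ≤ t → 0 ≤ x m t)
    (hx_loc : ∀ m, 1 ≤ m → m < M → ∀ T : ℝ, 0 ≤ T → IntegrableOn (x m) (Set.Icc 0 T))
    (hT₁_meas : ∀ m, 1 ≤ m → m < M → Measurable (T₁ m))
    (hT₁_nonneg : ∀ m, 1 ≤ m → m < M → ∀ ω, 0 ≤ T₁ m ω)
    (hsurv : ∀ m, 1 ≤ m → m < M → ∀ t : ℝ, 0 ≤ t →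
      μ {ω | t < T₁ m ω} = ENNReal.ofReal (Real.exp (-(∫ s in (0:ℝ)..t, x m s))))
    (T : ℝ) (hT : 0 ≤ T)
    (ε : ℝ) (hε : ε ∈ Set.Icc (0:ℝ) 1)
    (herr : ∀ m, 1 ≤ m → m < M → Real.exp (-(∫ s in (0:ℝ)..T, x m s)) ≤ ε) :
    (∀ m, 1 ≤ m → m < M →
      1 - ε ≤ ∫ ω, (∫ s in (0:ℝ)..(min (T₁ m ω) T), x m s) ∂μ)
    ∧ ((M : ℝ) - 1) * (1 - ε) / M ≤
        ((M : ℝ))⁻¹ * (0 + ∑ m ∈ Finset.Ioo 0 M,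
          ∫ ω, (∫ s in (0:ℝ)..(min (T₁ m ω) T), x m s) ∂μ) := by
  have part1 : ∀ m, 1 ≤ m → m < M →
      1 - ε ≤ ∫ ω, (∫ s in (0:ℝ)..(min (T₁ m ω) T), x m s) ∂μ := by
    intro m h1 h2
    exact key_one_message μ (x m) (T₁ m) (hx_nonneg m h1 h2) T hT
      (hx_loc m h1 h2 T hT) (hT₁_meas m h1 h2) (hT₁_nonneg m h1 h2)
      (hsurv m h1 h2) ε (herr m h1 h2)
  refine ⟨part1, ?_⟩
  have hMpos : (0:ℝ) < M := by positivity
  have hsum : ((M : ℝ) - 1) * (1 - ε) ≤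
      ∑ m ∈ Finset.Ioo 0 M, ∫ ω, (∫ s in (0:ℝ)..(min (T₁ m ω) T), x m s) ∂μ := by
    have hcard : (Finset.Ioo 0 M).card = M - 1 := by
      rw [Nat.card_Ioo]
      omega
    calc ((M : ℝ) - 1) * (1 - ε)
        = ∑ _m ∈ Finset.Ioo 0 M, (1 - ε) := by
          rw [Finset.sum_const, hcard, nsmul_eq_mul]
          congr 1
          have : ((M - 1 : ℕ) : ℝ) = (M : ℝ) - 1 := by
            rw [Nat.cast_sub (by omega)]; simp
          rw [this]
      _ ≤ _ := by
          apply Finset.sum_le_sum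
          intro m hm
          rw [Finset.mem_Ioo] at hm
          exact part1 m hm.1 hm.2
  rw [zero_add, div_eq_inv_mul]
  exact mul_le_mul_of_nonneg_left hsum (by positivity)
end

section
/- Achievability for sending log₂ M bits with zero dark current: let M ≥ 2 be an integer and A > 0. For every T > 0 partition [0,T) into the M−1 intervals [(m−1)T/(M−1), mT/(M−1)) for m = 1, …, M−1, and to send nonzero message m transmit constant power A on its interval until the first count or the end of the interval. Then for each nonzero message m the conditional error probability equals e^{−A T/(M−1)}, the energy used is ℰ_m = 1 − e^{−A T/(M−1)} ≤ 1, and the average energy over the M equiprobable messages (with ℰ₀ = 0) equals ((M−1)/M)(1 − e^{−A T/(M−1)}) ≤ (M−1)/M. In particular, for every ε > 0 there exists T > 0 such that all M conditional error probabilities are below ε while the average energy is at most (M−1)/M. -/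
open MeasureTheory Real

lemma exp_int_aux (A s : ℝ) (hA : 0 < A) :
    ∫ t in (0:ℝ)..s, Real.exp (-(A*t)) = (1 - Real.exp (-(A*s)))/A := by
  have : ∀ t ∈ Set.uIcc (0:ℝ) s, HasDerivAt (fun t => -Real.exp (-(A*t))/A) (Real.exp (-(A*t))) t := by
    intro t _
    have h1 : HasDerivAt (fun t : ℝ => -(A*t)) (-A) t := by
      have h := ((hasDerivAt_id t).const_mul A).neg
      simp only [mul_one] at h
      exact h
    have h2 := (Real.hasDerivAt_exp (-(A*t))).comp t h1
    have h3 := (h2.neg).div_const A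
    convert h3 using 1
    · rfl
    · rfl
    · rfl
    · field_simp
  rw [intervalIntegral.integral_eq_sub_of_hasDerivAt this]
  · simp; ring
  · apply Continuous.intervalIntegrable; continuity

lemma integral_min_exp_aux {Ω : Type*} [MeasurableSpace Ω] (μ : Measure Ω) [IsProbabilityMeasure μ]
    (A s : ℝ) (hA : 0 < A) (hs : 0 < s) (X : Ω → ℝ) (hm : Measurable X)
    (hnn : ∀ ω, 0 ≤ X ω)
    (hsurv : ∀ t : ℝ, 0 ≤ t → μ {ω | t < X ω} = ENNReal.ofReal (Real.exp (-(A*t)))) :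
    ∫ ω, min (X ω) s ∂μ = (1 - Real.exp (-(A*s)))/A := by
  have fmeas : Measurable fun ω => min (X ω) s := hm.min measurable_const
  have fint : Integrable (fun ω => min (X ω) s) μ := by
    refine (integrable_const s).mono' fmeas.aestronglyMeasurable (ae_of_all _ fun ω => ?_)
    rw [Real.norm_eq_abs, abs_of_nonneg (le_min (hnn ω) hs.le)]
    exact min_le_right _ _
  rw [fint.integral_eq_integral_meas_lt (ae_of_all _ fun ω => le_min (hnn ω) hs.le)]
  have congr1 : ∀ t ∈ Set.Ioi (0:ℝ),
      (μ {a | t < min (X a) s}).toReal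
        = Set.indicator (Set.Ioo 0 s) (fun t => Real.exp (-(A*t))) t := by
    intro t ht
    rcases lt_or_ge t s with h | h
    · have : {a | t < min (X a) s} = {a | t < X a} := by
        ext a; simp [lt_min_iff, h]
      rw [this, hsurv t (le_of_lt ht), Set.indicator_of_mem (Set.mem_Ioo.mpr ⟨ht, h⟩),
        ENNReal.toReal_ofReal (Real.exp_nonneg _)]
    · have : {a | t < min (X a) s} = (∅ : Set Ω) := by
        ext a; simp [lt_min_iff]; intro _; linarith
      rw [this, Set.indicator_of_notMem (by simp [not_lt.mpr h])]
      simp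
  simp only [measureReal_def]
  rw [setIntegral_congr_fun measurableSet_Ioi congr1, setIntegral_indicator measurableSet_Ioo,
    Set.inter_eq_right.mpr Set.Ioo_subset_Ioi_self, ← MeasureTheory.integral_Ioc_eq_integral_Ioo,
    ← intervalIntegral.integral_of_le hs.le]
  exact exp_int_aux A s hA


/-- Achievability for sending `log₂ M` bits with zero dark current: with the
interval `[0,T)` split into `M - 1` equal subintervals and nonzero message `m`
sent with constant power `A` on its subinterval until the first count (whose time
`T₁ m`, measured from the start of the subinterval, is exponential with rate `A`),
each nonzero message has conditional error probability `exp (-A T/(M-1))`, uses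
energy `ℰ_m = 1 - exp (-A T/(M-1)) ≤ 1`, and the average energy over the `M`
equiprobable messages (with `ℰ₀ = 0`) equals
`((M-1)/M) (1 - exp (-A T/(M-1))) ≤ (M-1)/M`. In particular for every `ε > 0`
there is `T > 0` making all conditional error probabilities less than `ε` while
the average energy stays at most `(M-1)/M`. -/
theorem achievability_M_messages
    (M : ℕ) (hM : 2 ≤ M) (A : ℝ) (hA : 0 < A)
    {Ω : Type*} [MeasurableSpace Ω] (μ : Measure Ω) [IsProbabilityMeasure μ]
    (T₁ : ℕ → Ω → ℝ)
    (hT₁_meas : ∀ m, 1 ≤ m → m < M → Measurable (T₁ m))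
    (hT₁_nonneg : ∀ m, 1 ≤ m → m < M → ∀ ω, 0 ≤ T₁ m ω)
    (hsurv : ∀ m, 1 ≤ m → m < M → ∀ t : ℝ, 0 ≤ t →
      μ {ω | t < T₁ m ω} = ENNReal.ofReal (Real.exp (-(A * t)))) :
    (∀ T : ℝ, 0 < T →
      (∀ m, 1 ≤ m → m < M →
        (μ {ω | T / ((M : ℝ) - 1) < T₁ m ω}).toReal
            = Real.exp (-(A * T / ((M : ℝ) - 1)))
        ∧ A * (∫ ω, min (T₁ m ω) (T / ((M : ℝ) - 1)) ∂μ)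
            = 1 - Real.exp (-(A * T / ((M : ℝ) - 1)))
        ∧ A * (∫ ω, min (T₁ m ω) (T / ((M : ℝ) - 1)) ∂μ) ≤ 1)
      ∧ ((M : ℝ))⁻¹ * (0 + ∑ m ∈ Finset.Ioo 0 M,
            A * (∫ ω, min (T₁ m ω) (T / ((M : ℝ) - 1)) ∂μ))
          = ((M : ℝ) - 1) / M * (1 - Real.exp (-(A * T / ((M : ℝ) - 1))))
      ∧ ((M : ℝ))⁻¹ * (0 + ∑ m ∈ Finset.Ioo 0 M,
            A * (∫ ω, min (T₁ m ω) (T / ((M : ℝ) - 1)) ∂μ))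
          ≤ ((M : ℝ) - 1) / M)
    ∧ ∀ ε : ℝ, 0 < ε → ∃ T : ℝ, 0 < T ∧
        Real.exp (-(A * T / ((M : ℝ) - 1))) < ε
        ∧ ((M : ℝ))⁻¹ * (0 + ∑ m ∈ Finset.Ioo 0 M,
              A * (∫ ω, min (T₁ m ω) (T / ((M : ℝ) - 1)) ∂μ))
            ≤ ((M : ℝ) - 1) / M := by
  have hM1 : (1:ℝ) ≤ (M : ℝ) - 1 := by
    have : (2:ℝ) ≤ (M:ℝ) := by exact_mod_cast hM
    linarith
  have hM1pos : (0:ℝ) < (M : ℝ) - 1 := by linarith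
  have hMpos : (0:ℝ) < (M : ℝ) := by linarith
  have main : ∀ T : ℝ, 0 < T →
      (∀ m, 1 ≤ m → m < M →
        (μ {ω | T / ((M : ℝ) - 1) < T₁ m ω}).toReal
            = Real.exp (-(A * T / ((M : ℝ) - 1)))
        ∧ A * (∫ ω, min (T₁ m ω) (T / ((M : ℝ) - 1)) ∂μ)
            = 1 - Real.exp (-(A * T / ((M : ℝ) - 1)))
        ∧ A * (∫ ω, min (T₁ m ω) (T / ((M : ℝ) - 1)) ∂μ) ≤ 1)
      ∧ ((M : ℝ))⁻¹ * (0 + ∑ m ∈ Finset.Ioo 0 M,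
            A * (∫ ω, min (T₁ m ω) (T / ((M : ℝ) - 1)) ∂μ))
          = ((M : ℝ) - 1) / M * (1 - Real.exp (-(A * T / ((M : ℝ) - 1))))
      ∧ ((M : ℝ))⁻¹ * (0 + ∑ m ∈ Finset.Ioo 0 M,
            A * (∫ ω, min (T₁ m ω) (T / ((M : ℝ) - 1)) ∂μ))
          ≤ ((M : ℝ) - 1) / M := by
    intro T hT
    set s : ℝ := T / ((M : ℝ) - 1) with hsdef
    have hs : 0 < s := div_pos hT hM1pos
    have harg : A * T / ((M : ℝ) - 1) = A * s := by rw [hsdef]; ring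
    have hint : ∀ m, 1 ≤ m → m < M →
        ∫ ω, min (T₁ m ω) s ∂μ = (1 - Real.exp (-(A*s)))/A := fun m h1 h2 =>
      integral_min_exp_aux μ A s hA hs (T₁ m) (hT₁_meas m h1 h2)
        (hT₁_nonneg m h1 h2) (hsurv m h1 h2)
    have henergy : ∀ m, 1 ≤ m → m < M →
        A * (∫ ω, min (T₁ m ω) s ∂μ) = 1 - Real.exp (-(A*s)) := by
      intro m h1 h2
      rw [hint m h1 h2]
      field_simp
    have hexp_le : Real.exp (-(A*s)) ≤ 1 :=
      Real.exp_le_one_iff.mpr (by nlinarith)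
    have hexp_nn : 0 ≤ Real.exp (-(A*s)) := Real.exp_nonneg _
    have hcast : ((M - 0 - 1 : ℕ) : ℝ) = (M:ℝ) - 1 := by
      have h1 : M - 0 - 1 = M - 1 := by omega
      rw [h1, Nat.cast_sub (by omega)]; simp
    have havg : ((M : ℝ))⁻¹ * (0 + ∑ m ∈ Finset.Ioo 0 M,
          A * (∫ ω, min (T₁ m ω) s ∂μ))
        = ((M : ℝ) - 1) / M * (1 - Real.exp (-(A * s))) := by
      rw [Finset.sum_congr rfl (fun m hm => by
        obtain ⟨h1, h2⟩ := Finset.mem_Ioo.mp hm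
        exact henergy m h1 h2), Finset.sum_const, Nat.card_Ioo, nsmul_eq_mul, hcast]
      field_simp
      ring
    refine ⟨fun m h1 h2 => ⟨?_, by rw [harg]; exact henergy m h1 h2,
        by rw [henergy m h1 h2]; linarith⟩, by rw [harg]; exact havg, ?_⟩
    · rw [harg, hsurv m h1 h2 s hs.le, ENNReal.toReal_ofReal (Real.exp_nonneg _)]
    · rw [havg]
      have h0 : (0:ℝ) ≤ ((M : ℝ) - 1) / M := by positivity
      nlinarith
  refine ⟨main, fun ε hε => ?_⟩
  refine ⟨((M : ℝ) - 1) * (1 + |Real.log ε|) / A, ?_, ?_, ?_⟩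
  · positivity
  · have harg2 : A * (((M:ℝ)-1) * (1+|Real.log ε|) / A) / ((M:ℝ)-1) = 1+|Real.log ε| := by
      field_simp
    rw [harg2]
    calc Real.exp (-(1+|Real.log ε|)) < Real.exp (Real.log ε) := by
          apply Real.exp_lt_exp.mpr
          have := neg_abs_le (Real.log ε)
          linarith
      _ = ε := Real.exp_log hε
  · exact (main _ (by positivity)).2.2
end
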